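/- arXiv:1112.0781 — 5 statements merged into one kernel-verified Lean document; each statement's English description precedes it below -/
import Mathlib

section
/- Two coalgebra morphisms f', f'' : C → D₁ ⊗ D₂ are equal if and only if (ε_{D₁} ⊗ id) ∘ f' = (ε_{D₁} ⊗ id) ∘ f'' and (id ⊗ ε_{D₂}) ∘ f' = (id ⊗ ε_{D₂}) ∘ f''. -/
open TensorProduct

noncomputable section Aux

variable {K D₁ D₂ : Type} [CommRing K]
    [AddCommGroup D₁] [AddCommGroup D₂]
    [Module K D₁] [Module K D₂]
    [Coalgebra K D₁] [Coalgebra K D₂]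

/-- The retraction `(D₁ ⊗ K) ⊗ (K ⊗ D₂) → D₁ ⊗ D₂`. -/
noncomputable def auxPhi : ((D₁ ⊗[K] K) ⊗[K] (K ⊗[K] D₂)) →ₗ[K] D₁ ⊗[K] D₂ :=
  TensorProduct.map (TensorProduct.rid K D₁).toLinearMap (TensorProduct.lid K D₂).toLinearMap

/-- The map `D₁ ⊗ D₂ ⊗ D₁ ⊗ D₂ → D₁ ⊗ D₂` given by `(id ⊗ ε) ⊗ (ε ⊗ id)` followed by `auxPhi`. -/
noncomputable def auxG : ((D₁ ⊗[K] D₂) ⊗[K] (D₁ ⊗[K] D₂)) →ₗ[K] D₁ ⊗[K] D₂ :=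
  auxPhi ∘ₗ TensorProduct.map
    (LinearMap.lTensor D₁ (Coalgebra.counit : D₂ →ₗ[K] K))
    (LinearMap.rTensor D₂ (Coalgebra.counit : D₁ →ₗ[K] K))

lemma auxG_comul (x : D₁ ⊗[K] D₂) : auxG (Coalgebra.comul (R := K) x) = x := by
  have key : (auxG.comp (Coalgebra.comul (R := K) (A := D₁ ⊗[K] D₂)) :
      D₁ ⊗[K] D₂ →ₗ[K] D₁ ⊗[K] D₂) = LinearMap.id := by
    apply TensorProduct.ext'
    intro d₁ d₂
    set R₁ := Coalgebra.Repr.arbitrary K d₁ with hR₁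
    set R₂ := Coalgebra.Repr.arbitrary K d₂ with hR₂
    have hc : (Coalgebra.comul : D₁ ⊗[K] D₂ →ₗ[K] _) (d₁ ⊗ₜ[K] d₂) =
        TensorProduct.tensorTensorTensorComm K D₁ D₁ D₂ D₂
          ((Coalgebra.comul d₁) ⊗ₜ[K] (Coalgebra.comul d₂)) := rfl
    rw [LinearMap.comp_apply, LinearMap.id_apply, hc, ← R₁.eq, ← R₂.eq]
    simp only [sum_tmul, tmul_sum, map_sum, tensorTensorTensorComm_tmul,
      auxG, auxPhi, LinearMap.comp_apply, TensorProduct.map_tmul,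
      LinearMap.lTensor_tmul, LinearMap.rTensor_tmul, LinearEquiv.coe_coe,
      TensorProduct.rid_tmul, TensorProduct.lid_tmul]
    have e₁ : ∑ i ∈ R₁.index, (Coalgebra.counit (R := K) (R₁.right i)) • (R₁.left i) = d₁ := by
      have h := congrArg (TensorProduct.rid K D₁) (Coalgebra.sum_tmul_counit_eq (R := K) R₁)
      simp only [map_sum, TensorProduct.rid_tmul, one_smul] at h
      exact h
    have e₂ : ∑ j ∈ R₂.index, (Coalgebra.counit (R := K) (R₂.left j)) • (R₂.right j) = d₂ := by
      have h := congrArg (TensorProduct.lid K D₂) (Coalgebra.sum_counit_tmul_eq (R := K) R₂)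
      simp only [map_sum, TensorProduct.lid_tmul, one_smul] at h
      exact h
    calc ∑ j ∈ R₂.index, ∑ i ∈ R₁.index,
          ((Coalgebra.counit (R := K) (R₂.left j)) • R₁.left i) ⊗ₜ[K]
            ((Coalgebra.counit (R := K) (R₁.right i)) • R₂.right j)
        = (∑ i ∈ R₁.index, (Coalgebra.counit (R := K) (R₁.right i)) • (R₁.left i)) ⊗ₜ[K]
            (∑ j ∈ R₂.index, (Coalgebra.counit (R := K) (R₂.left j)) • (R₂.right j)) := by
          rw [sum_tmul]
          rw [Finset.sum_comm]
          refine Finset.sum_congr rfl fun i _ => ?_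
          rw [tmul_sum]
          refine Finset.sum_congr rfl fun j _ => ?_
          simp [TensorProduct.smul_tmul', TensorProduct.tmul_smul, smul_smul, mul_comm]
      _ = d₁ ⊗ₜ[K] d₂ := by rw [e₁, e₂]
  simpa using LinearMap.congr_fun key x

variable {C : Type} [AddCommGroup C] [Module K C] [Coalgebra K C]

lemma coalghom_eq_auxG (f : C →ₗc[K] D₁ ⊗[K] D₂) (c : C) :
    f c = auxPhi (TensorProduct.map
      ((LinearMap.lTensor D₁ (Coalgebra.counit : D₂ →ₗ[K] K)) ∘ₗ (f : C →ₗ[K] D₁ ⊗[K] D₂))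
      ((LinearMap.rTensor D₂ (Coalgebra.counit : D₁ →ₗ[K] K)) ∘ₗ (f : C →ₗ[K] D₁ ⊗[K] D₂))
      (Coalgebra.comul c)) := by
  have h := CoalgHomClass.map_comp_comul (f : C →ₗc[K] D₁ ⊗[K] D₂)
  have h' : TensorProduct.map (f : C →ₗ[K] D₁ ⊗[K] D₂) (f : C →ₗ[K] D₁ ⊗[K] D₂)
      (Coalgebra.comul c) = Coalgebra.comul (f c) := LinearMap.congr_fun h c
  rw [← auxG_comul (f c), ← h']
  simp only [auxG, auxPhi, ← LinearMap.comp_apply, ← LinearMap.comp_assoc,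
    ← TensorProduct.map_comp]

end Aux

/-- Two coalgebra morphisms `f', f'' : C → D₁ ⊗ D₂` are equal iff
`(ε ⊗ id) ∘ f' = (ε ⊗ id) ∘ f''` and `(id ⊗ ε) ∘ f' = (id ⊗ ε) ∘ f''`. -/
theorem stmt2 {K C D₁ D₂ : Type} [CommRing K]
    [AddCommGroup C] [AddCommGroup D₁] [AddCommGroup D₂]
    [Module K C] [Module K D₁] [Module K D₂]
    [Coalgebra K C] [Coalgebra K D₁] [Coalgebra K D₂]
    (f' f'' : C →ₗc[K] D₁ ⊗[K] D₂) :
    f' = f'' ↔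
      ((LinearMap.rTensor D₂ (Coalgebra.counit : D₁ →ₗ[K] K)) ∘ₗ
          (f' : C →ₗ[K] D₁ ⊗[K] D₂) =
        (LinearMap.rTensor D₂ (Coalgebra.counit : D₁ →ₗ[K] K)) ∘ₗ
          (f'' : C →ₗ[K] D₁ ⊗[K] D₂) ∧
        (LinearMap.lTensor D₁ (Coalgebra.counit : D₂ →ₗ[K] K)) ∘ₗ
            (f' : C →ₗ[K] D₁ ⊗[K] D₂) =
          (LinearMap.lTensor D₁ (Coalgebra.counit : D₂ →ₗ[K] K)) ∘ₗ
            (f'' : C →ₗ[K] D₁ ⊗[K] D₂)) := by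
  constructor
  · rintro rfl; exact ⟨rfl, rfl⟩
  · rintro ⟨h₁, h₂⟩
    ext c
    rw [coalghom_eq_auxG f' c, coalghom_eq_auxG f'' c, h₁, h₂]
end

section
/- Let A and B be K-algebras and R : B ⊗ A → A ⊗ B a K-linear map satisfying: R ∘ (m_B ⊗ A) = (A ⊗ m_B) ∘ (R ⊗ B) ∘ (B ⊗ R); R ∘ (B ⊗ m_A) = (m_A ⊗ B) ∘ (A ⊗ R) ∘ (R ⊗ A); R(1_B ⊗ a) = a ⊗ 1_B for all a ∈ A; and R(b ⊗ 1_A) = 1_A ⊗ b for all b ∈ B. Then A ⊗ B equipped with multiplication (m_A ⊗ m_B) ∘ (A ⊗ R ⊗ B) and unit 1_A ⊗ 1_B is an associative unital K-algebra. -/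
open TensorProduct

/-- A twisting map `R : B ⊗ A → A ⊗ B` between two `K`-algebras makes `A ⊗ B` into an
associative unital algebra with multiplication `(m_A ⊗ m_B) ∘ (A ⊗ R ⊗ B)` and unit
`1_A ⊗ 1_B`. -/
theorem stmt3 {K A B : Type} [CommRing K] [Ring A] [Ring B] [Algebra K A] [Algebra K B]
    (R : B ⊗[K] A →ₗ[K] A ⊗[K] B)
    -- R ∘ (m_B ⊗ A) = (A ⊗ m_B) ∘ (R ⊗ B) ∘ (B ⊗ R)
    (hfm1 : R ∘ₗ LinearMap.rTensor A (LinearMap.mul' K B) =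
      LinearMap.lTensor A (LinearMap.mul' K B) ∘ₗ
        (TensorProduct.assoc K A B B).toLinearMap ∘ₗ
          LinearMap.rTensor B R ∘ₗ
            (TensorProduct.assoc K B A B).symm.toLinearMap ∘ₗ
              LinearMap.lTensor B R ∘ₗ (TensorProduct.assoc K B B A).toLinearMap)
    -- R ∘ (B ⊗ m_A) = (m_A ⊗ B) ∘ (A ⊗ R) ∘ (R ⊗ A)
    (hfm2 : R ∘ₗ LinearMap.lTensor B (LinearMap.mul' K A) =
      LinearMap.rTensor B (LinearMap.mul' K A) ∘ₗ
        (TensorProduct.assoc K A A B).symm.toLinearMap ∘ₗ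
          LinearMap.lTensor A R ∘ₗ
            (TensorProduct.assoc K A B A).toLinearMap ∘ₗ
              LinearMap.rTensor A R ∘ₗ (TensorProduct.assoc K B A A).symm.toLinearMap)
    (hfm3 : ∀ a : A, R ((1 : B) ⊗ₜ[K] a) = a ⊗ₜ[K] (1 : B))
    (hfm4 : ∀ b : B, R (b ⊗ₜ[K] (1 : A)) = (1 : A) ⊗ₜ[K] b)
    -- μ is the multiplication (m_A ⊗ m_B) ∘ (A ⊗ R ⊗ B)
    (μ : A ⊗[K] B →ₗ[K] A ⊗[K] B →ₗ[K] A ⊗[K] B)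
    (hμ : ∀ (a a' : A) (b b' : B),
      μ (a ⊗ₜ[K] b) (a' ⊗ₜ[K] b') =
        TensorProduct.map (LinearMap.mulLeft K a) (LinearMap.mulRight K b') (R (b ⊗ₜ[K] a'))) :
    (∀ x y z : A ⊗[K] B, μ (μ x y) z = μ x (μ y z)) ∧
    (∀ x : A ⊗[K] B, μ ((1 : A) ⊗ₜ[K] (1 : B)) x = x ∧ μ x ((1 : A) ⊗ₜ[K] (1 : B)) = x) := by

  -- helper: collapsing `lTensor mul' ∘ assoc` on `t ⊗ₜ y`
  have hPhi : ∀ (t : A ⊗[K] B) (y : B),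
      LinearMap.lTensor A (LinearMap.mul' K B)
          ((TensorProduct.assoc K A B B) (t ⊗ₜ[K] y)) =
        TensorProduct.map LinearMap.id (LinearMap.mulRight K y) t := by
    intro t y
    induction t using TensorProduct.induction_on with
    | zero => simp only [zero_tmul, tmul_zero, LinearEquiv.map_zero, LinearMap.map_zero, LinearMap.zero_apply]
    | tmul p q => simp
    | add t1 t2 h1 h2 => simp [add_tmul, h1, h2]
  -- helper: collapsing `rTensor mul' ∘ assoc.symm` on `u ⊗ₜ t`
  have hPsi : ∀ (u : A) (t : A ⊗[K] B),
      LinearMap.rTensor B (LinearMap.mul' K A)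
          ((TensorProduct.assoc K A A B).symm (u ⊗ₜ[K] t)) =
        TensorProduct.map (LinearMap.mulLeft K u) LinearMap.id t := by
    intro u t
    induction t using TensorProduct.induction_on with
    | zero => simp only [zero_tmul, tmul_zero, LinearEquiv.map_zero, LinearMap.map_zero, LinearMap.zero_apply]
    | tmul p q => simp
    | add t1 t2 h1 h2 => simp [tmul_add, h1, h2]
  -- pointwise version of hfm1
  have lem1 : ∀ (b b' : B) (a : A),
      R ((b * b') ⊗ₜ[K] a) =
        LinearMap.lTensor A (LinearMap.mul' K B)
          ((TensorProduct.assoc K A B B)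
            (LinearMap.rTensor B R
              ((TensorProduct.assoc K B A B).symm (b ⊗ₜ[K] R (b' ⊗ₜ[K] a))))) := by
    intro b b' a
    have h := LinearMap.congr_fun hfm1 ((b ⊗ₜ[K] b') ⊗ₜ[K] a)
    simpa only [LinearMap.comp_apply, LinearMap.rTensor_tmul, LinearMap.mul'_apply,
      LinearEquiv.coe_coe, TensorProduct.assoc_tmul, LinearMap.lTensor_tmul] using h
  -- pointwise version of hfm2
  have lem2 : ∀ (b : B) (a a' : A),
      R (b ⊗ₜ[K] (a * a')) =
        LinearMap.rTensor B (LinearMap.mul' K A)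
          ((TensorProduct.assoc K A A B).symm
            (LinearMap.lTensor A R
              ((TensorProduct.assoc K A B A) (R (b ⊗ₜ[K] a) ⊗ₜ[K] a')))) := by
    intro b a a'
    have h := LinearMap.congr_fun hfm2 (b ⊗ₜ[K] (a ⊗ₜ[K] a'))
    simpa only [LinearMap.comp_apply, LinearMap.lTensor_tmul, LinearMap.mul'_apply,
      LinearEquiv.coe_coe, TensorProduct.assoc_symm_tmul, LinearMap.rTensor_tmul] using h
  -- both sides of associativity equal a common symmetric expression
  have key1 : ∀ (a a' a'' : A) (b b' b'' : B),
      μ (μ (a ⊗ₜ[K] b) (a' ⊗ₜ[K] b')) (a'' ⊗ₜ[K] b'') =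
        TensorProduct.map (LinearMap.mulLeft K a) (LinearMap.mulRight K b'')
          (μ (R (b ⊗ₜ[K] a')) (R (b' ⊗ₜ[K] a''))) := by
    intro a a' a'' b b' b''
    rw [hμ a a' b b']
    generalize R (b ⊗ₜ[K] a') = w
    induction w using TensorProduct.induction_on with
    | zero => simp only [zero_tmul, tmul_zero, LinearEquiv.map_zero, LinearMap.map_zero, LinearMap.zero_apply]
    | add w1 w2 h1 h2 => simp only [map_add, LinearMap.add_apply, h1, h2]
    | tmul u v =>
      rw [TensorProduct.map_tmul, LinearMap.mulLeft_apply, LinearMap.mulRight_apply,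
        hμ, lem1 v b' a'']
      generalize R (b' ⊗ₜ[K] a'') = s
      induction s using TensorProduct.induction_on with
      | zero => simp only [zero_tmul, tmul_zero, LinearEquiv.map_zero, LinearMap.map_zero, LinearMap.zero_apply]
      | add s1 s2 h1 h2 => simp only [tmul_add, map_add, h1, h2]
      | tmul x y =>
        rw [TensorProduct.assoc_symm_tmul, LinearMap.rTensor_tmul, hPhi, hμ]
        generalize R (v ⊗ₜ[K] x) = r
        induction r using TensorProduct.induction_on with
        | zero => simp only [zero_tmul, tmul_zero, LinearEquiv.map_zero, LinearMap.map_zero, LinearMap.zero_apply]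
        | add r1 r2 h1 h2 => simp only [map_add, h1, h2]
        | tmul p q => simp [mul_assoc]
  have key2 : ∀ (a a' a'' : A) (b b' b'' : B),
      μ (a ⊗ₜ[K] b) (μ (a' ⊗ₜ[K] b') (a'' ⊗ₜ[K] b'')) =
        TensorProduct.map (LinearMap.mulLeft K a) (LinearMap.mulRight K b'')
          (μ (R (b ⊗ₜ[K] a')) (R (b' ⊗ₜ[K] a''))) := by
    intro a a' a'' b b' b''
    rw [hμ a' a'' b' b'']
    generalize R (b' ⊗ₜ[K] a'') = s
    induction s using TensorProduct.induction_on with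
    | zero => simp only [zero_tmul, tmul_zero, LinearEquiv.map_zero, LinearMap.map_zero, LinearMap.zero_apply]
    | add s1 s2 h1 h2 => simp only [map_add, h1, h2]
    | tmul x y =>
      rw [TensorProduct.map_tmul, LinearMap.mulLeft_apply, LinearMap.mulRight_apply,
        hμ, lem2 b a' x]
      generalize R (b ⊗ₜ[K] a') = w
      induction w using TensorProduct.induction_on with
      | zero => simp only [zero_tmul, tmul_zero, LinearEquiv.map_zero, LinearMap.map_zero, LinearMap.zero_apply]
      | add w1 w2 h1 h2 => simp only [add_tmul, map_add, LinearMap.add_apply, h1, h2]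
      | tmul u v =>
        rw [TensorProduct.assoc_tmul, LinearMap.lTensor_tmul, hPsi, hμ]
        generalize R (v ⊗ₜ[K] x) = r
        induction r using TensorProduct.induction_on with
        | zero => simp only [zero_tmul, tmul_zero, LinearEquiv.map_zero, LinearMap.map_zero, LinearMap.zero_apply]
        | add r1 r2 h1 h2 => simp only [map_add, h1, h2]
        | tmul p q => simp [mul_assoc]
  constructor
  · intro x y z
    induction x using TensorProduct.induction_on with
    | zero => simp only [zero_tmul, tmul_zero, LinearEquiv.map_zero, LinearMap.map_zero, LinearMap.zero_apply]
    | add x1 x2 h1 h2 => simp only [map_add, LinearMap.add_apply, h1, h2]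
    | tmul a b =>
      induction y using TensorProduct.induction_on with
      | zero => simp only [zero_tmul, tmul_zero, LinearEquiv.map_zero, LinearMap.map_zero, LinearMap.zero_apply]
      | add y1 y2 h1 h2 => simp only [map_add, LinearMap.add_apply, h1, h2]
      | tmul a' b' =>
        induction z using TensorProduct.induction_on with
        | zero => simp only [zero_tmul, tmul_zero, LinearEquiv.map_zero, LinearMap.map_zero, LinearMap.zero_apply]
        | add z1 z2 h1 h2 => simp only [map_add, h1, h2]
        | tmul a'' b'' => rw [key1, key2]
  · intro x
    constructor
    · induction x using TensorProduct.induction_on with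
      | zero => simp only [zero_tmul, tmul_zero, LinearEquiv.map_zero, LinearMap.map_zero, LinearMap.zero_apply]
      | add x1 x2 h1 h2 => simp only [map_add, h1, h2]
      | tmul a b => rw [hμ, hfm3]; simp
    · induction x using TensorProduct.induction_on with
      | zero => simp only [zero_tmul, tmul_zero, LinearEquiv.map_zero, LinearMap.map_zero, LinearMap.zero_apply]
      | add x1 x2 h1 h2 => simp only [map_add, LinearMap.add_apply, h1, h2]
      | tmul a b => rw [hμ, hfm4]; simp
end

section
/- Let 𝐀 and 𝐁 be ordinary (Set-enriched) small categories with the same object set S, together with a function |···| : S³ → S and maps ▷ sending (f : y → x in B, g : z → y in A) to f▷g : |xyz| → x in A, and ◁ sending (f, g) to f◁g : z → |xyz| in B, satisfying the matched-pair axioms: (f∘f')▷g = f▷(f'▷g) with |xy|yzt|| = |xzt|; (f∘f')◁g = (f◁(f'▷g)) ∘ (f'◁g); f◁(g∘g') = (f◁g)◁g' with ||xyz|zt| = |xyt|; f▷(g∘g') = (f▷g) ∘ ((f◁g)▷g'); 1ₓ▷g = g and 1ₓ◁g = 1 with |xxy| = y; f▷1 = 1 and f◁1 = f with |xyy| = x.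 Then there is a category A ⊗_R B with object set S, hom-sets Hom(y, x) = ⨿_{u∈S} Hom_A(u, x) × Hom_B(y, u), identities (1ₓ^A, 1ₓ^B), and composition (g, f) ∘ (g', f') = (g ∘ (f▷g'), (f◁g') ∘ f'), and this composition is associative and unital. -/
/-- A matched pair of ordinary (Set-enriched) small categories `𝐀`, `𝐁` with common object
set `S`.  `Ahom x y` denotes the set of morphisms `y → x` in `𝐀` (the paper's `ₓA_y`), and
similarly for `𝐁`.  `act f g = f▷g : |x y z| → x` in `𝐀` and `coact f g = f◁g : z → |x y z|`
in `𝐁`, for `f : y → x` in `𝐁` and `g : z → y` in `𝐀`. -/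
structure MatchedPairCats where
  S : Type
  Ahom : S → S → Type
  Bhom : S → S → Type
  idA : ∀ x, Ahom x x
  compA : ∀ {x y z}, Ahom x y → Ahom y z → Ahom x z
  idB : ∀ x, Bhom x x
  compB : ∀ {x y z}, Bhom x y → Bhom y z → Bhom x z
  -- 𝐀 is a category
  assocA : ∀ {x y z t} (g : Ahom x y) (h : Ahom y z) (k : Ahom z t),
    compA (compA g h) k = compA g (compA h k)
  idA_comp : ∀ {x y} (g : Ahom x y), compA (idA x) g = g
  comp_idA : ∀ {x y} (g : Ahom x y), compA g (idA y) = g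
  -- 𝐁 is a category
  assocB : ∀ {x y z t} (f : Bhom x y) (h : Bhom y z) (k : Bhom z t),
    compB (compB f h) k = compB f (compB h k)
  idB_comp : ∀ {x y} (f : Bhom x y), compB (idB x) f = f
  comp_idB : ∀ {x y} (f : Bhom x y), compB f (idB y) = f
  -- the function |···| : S³ → S and the actions ▷, ◁
  bar : S → S → S → S
  act : ∀ {x y z}, Bhom x y → Ahom y z → Ahom x (bar x y z)
  coact : ∀ {x y z}, Bhom x y → Ahom y z → Bhom (bar x y z) z
  -- |xy|yzt|| = |xzt| whenever the relevant morphisms exist, etc.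
  bar1 : ∀ {x y z t}, Bhom x y → Bhom y z → Ahom z t → bar x y (bar y z t) = bar x z t
  bar2 : ∀ {x y z t}, Bhom x y → Ahom y z → Ahom z t → bar (bar x y z) z t = bar x y t
  bar3 : ∀ {x y}, Ahom x y → bar x x y = y
  bar4 : ∀ {x y}, Bhom x y → bar x y y = x
  -- (f∘f')▷g = f▷(f'▷g)
  ax1 : ∀ {x y z t} (f : Bhom x y) (f' : Bhom y z) (g : Ahom z t),
    HEq (act (compB f f') g) (act f (act f' g))
  -- (f∘f')◁g = (f◁(f'▷g)) ∘ (f'◁g)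
  ax2 : ∀ {x y z t} (f : Bhom x y) (f' : Bhom y z) (g : Ahom z t),
    HEq (coact (compB f f') g) (compB (coact f (act f' g)) (coact f' g))
  -- f▷(g∘g') = (f▷g) ∘ ((f◁g)▷g')
  ax3 : ∀ {x y z t} (f : Bhom x y) (g : Ahom y z) (g' : Ahom z t),
    HEq (act f (compA g g')) (compA (act f g) (act (coact f g) g'))
  -- f◁(g∘g') = (f◁g)◁g'
  ax4 : ∀ {x y z t} (f : Bhom x y) (g : Ahom y z) (g' : Ahom z t),
    HEq (coact f (compA g g')) (coact (coact f g) g')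
  -- 1ₓ▷g = g and 1ₓ◁g = 1
  ax5 : ∀ {x y} (g : Ahom x y), HEq (act (idB x) g) g
  ax6 : ∀ {x y} (g : Ahom x y), HEq (coact (idB x) g) (idB y)
  -- f▷1 = 1 and f◁1 = f
  ax7 : ∀ {x y} (f : Bhom x y), HEq (act f (idA y)) (idA x)
  ax8 : ∀ {x y} (f : Bhom x y), HEq (coact f (idA y)) f

namespace MatchedPairCats

variable (M : MatchedPairCats)

/-- Hom-sets of the twisted tensor product category `A ⊗_R B`:
`Hom(y, x) = ⨿_{u ∈ S} Hom_A(u, x) × Hom_B(y, u)`. -/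
def Hom (x y : M.S) : Type := Σ u : M.S, M.Ahom x u × M.Bhom u y

/-- Composition in `A ⊗_R B`: `(g, f) ∘ (g', f') = (g ∘ (f▷g'), (f◁g') ∘ f')`. -/
def comp {x y z : M.S} : M.Hom x y → M.Hom y z → M.Hom x z
  | ⟨u, g, f⟩, ⟨v, g', f'⟩ =>
      ⟨M.bar u y v, M.compA g (M.act f g'), M.compB (M.coact f g') f'⟩

/-- Identities of `A ⊗_R B`: `(1ₓ^A, 1ₓ^B)`. -/
def ident (x : M.S) : M.Hom x x := ⟨x, M.idA x, M.idB x⟩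

end MatchedPairCats

namespace MatchedPairCats

lemma hom_ext {M : MatchedPairCats} {x y u v : M.S} (h : u = v)
    {g : M.Ahom x u} {g' : M.Ahom x v} {f : M.Bhom u y} {f' : M.Bhom v y}
    (hg : HEq g g') (hf : HEq f f') :
    (⟨u, g, f⟩ : M.Hom x y) = ⟨v, g', f'⟩ := by
  subst h; rw [eq_of_heq hg, eq_of_heq hf]

lemma compA_congr {M : MatchedPairCats} {x y y' z z' : M.S} (hy : y = y') (hz : z = z')
    {a : M.Ahom x y} {a' : M.Ahom x y'} {b : M.Ahom y z} {b' : M.Ahom y' z'}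
    (ha : HEq a a') (hb : HEq b b') : HEq (M.compA a b) (M.compA a' b') := by
  subst hy; subst hz; rw [eq_of_heq ha, eq_of_heq hb]

lemma compB_congr {M : MatchedPairCats} {x x' y y' z : M.S} (hx : x = x') (hy : y = y')
    {a : M.Bhom x y} {a' : M.Bhom x' y'} {b : M.Bhom y z} {b' : M.Bhom y' z}
    (ha : HEq a a') (hb : HEq b b') : HEq (M.compB a b) (M.compB a' b') := by
  subst hx; subst hy; rw [eq_of_heq ha, eq_of_heq hb]

end MatchedPairCats

/-- The twisted tensor product `A ⊗_R B` of a matched pair of `Set`-categories is a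
category: its composition is associative and unital. -/
theorem stmt11 (M : MatchedPairCats) :
    (∀ {x y z t : M.S} (p : M.Hom x y) (q : M.Hom y z) (r : M.Hom z t),
      M.comp (M.comp p q) r = M.comp p (M.comp q r)) ∧
    (∀ {x y : M.S} (p : M.Hom x y),
      M.comp (M.ident x) p = p ∧ M.comp p (M.ident y) = p) := by
  constructor
  · intro x y z t p q r
    obtain ⟨u, g, f⟩ := p
    obtain ⟨v, g', f'⟩ := q
    obtain ⟨w, g'', f''⟩ := r
    show (⟨M.bar (M.bar u y v) z w, _, _⟩ : M.Hom x t) = ⟨M.bar u y (M.bar v z w), _, _⟩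
    have hb1 : M.bar (M.bar u y v) v (M.bar v z w) = M.bar (M.bar u y v) z w :=
      M.bar1 (M.coact f g') f' g''
    have hb2 : M.bar (M.bar u y v) v (M.bar v z w) = M.bar u y (M.bar v z w) :=
      M.bar2 f g' (M.act f' g'')
    apply MatchedPairCats.hom_ext (hb1 ▸ hb2)
    · -- A-components
      exact HEq.trans
        (MatchedPairCats.compA_congr rfl hb1.symm HEq.rfl (M.ax1 (M.coact f g') f' g''))
        (HEq.trans (heq_of_eq (M.assocA g (M.act f g') (M.act (M.coact f g') (M.act f' g''))))
          (MatchedPairCats.compA_congr rfl hb2 HEq.rfl (M.ax3 f g' (M.act f' g'')).symm))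
    · -- B-components
      exact HEq.trans
        (MatchedPairCats.compB_congr hb1.symm rfl (M.ax2 (M.coact f g') f' g'') HEq.rfl)
        (HEq.trans
          (heq_of_eq (M.assocB (M.coact (M.coact f g') (M.act f' g'')) (M.coact f' g'') f''))
          (MatchedPairCats.compB_congr hb2 rfl (M.ax4 f g' (M.act f' g'')).symm HEq.rfl))
  · intro x y p
    obtain ⟨u, g, f⟩ := p
    constructor
    · show (⟨M.bar x x u, M.compA (M.idA x) (M.act (M.idB x) g),
          M.compB (M.coact (M.idB x) g) f⟩ : M.Hom x y) = ⟨u, g, f⟩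
      apply MatchedPairCats.hom_ext (M.bar3 g)
      · exact HEq.trans
          (MatchedPairCats.compA_congr rfl (M.bar3 g) HEq.rfl (M.ax5 g))
          (heq_of_eq (M.idA_comp g))
      · exact HEq.trans
          (MatchedPairCats.compB_congr (M.bar3 g) rfl (M.ax6 g) HEq.rfl)
          (heq_of_eq (M.idB_comp f))
    · show (⟨M.bar u y y, M.compA g (M.act f (M.idA y)),
          M.compB (M.coact f (M.idA y)) (M.idB y)⟩ : M.Hom x y) = ⟨u, g, f⟩
      apply MatchedPairCats.hom_ext (M.bar4 f)
      · exact HEq.trans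
          (MatchedPairCats.compA_congr rfl (M.bar4 f) HEq.rfl (M.ax7 f))
          (heq_of_eq (M.comp_idA g))
      · exact HEq.trans
          (MatchedPairCats.compB_congr (M.bar4 f) rfl (M.ax8 f) HEq.rfl)
          (heq_of_eq (M.comp_idB f))
end

section
/- Let 𝐀 and 𝐁 be thin categories with object set S, T = {(x,y,z) ∈ S³ : Hom_B(y,x) ≠ ∅ and Hom_A(z,y) ≠ ∅}, and |···| : S³ → S a function satisfying the conditions (i)–(v): (i) (y,z,t) ∈ T and (x,y,|yzt|) ∈ T imply |xy|yzt|| = |xzt|; (ii) (x,y,z) ∈ T and (|xyz|,z,t) ∈ T imply ||xyz|zt| = |xyt|; (iii) (x,x,y) ∈ T implies |xxy| = y; (iv) (x,y,y) ∈ T implies |xyy| = x; (v) (x,y,z) ∈ T implies Hom_A(|xyz|, x) ≠ ∅ and Hom_B(z, |xyz|) ≠ ∅. Then the data with objects S, hom-sets Hom(y,x) = {u ∈ S : Hom_A(u,x) ≠ ∅ and Hom_B(y,u) ≠ ∅}, identity x ∈ Hom(x,x), and composition u ∘ v = |uyv| for u ∈ Hom(y,x), v ∈ Hom(z,y), form a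 category. -/
/-- Twisted tensor product of two thin categories.  A thin category with object set `S` is
a preorder; `A x u` means "there is a morphism `u → x` in `𝐀`" and `B u y` means "there is
a morphism `y → u` in `𝐁`".  `T = {(x,y,z) : Hom_B(y,x) ≠ ∅ ∧ Hom_A(z,y) ≠ ∅}`.  Given
`|···| : S³ → S` satisfying (i)–(v), the data with hom-sets
`Hom(y,x) = {u : Hom_A(u,x) ≠ ∅ ∧ Hom_B(y,u) ≠ ∅}`, identities `x ∈ Hom(x,x)`, and
composition `u ∘ v = |uyv|` form a category. -/
theorem stmt15 {S : Type} (A B : S → S → Prop)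
    -- 𝐀 and 𝐁 are thin categories (preorders): identities and composition
    (hArefl : ∀ x, A x x) (hAtrans : ∀ {x y z}, A x y → A y z → A x z)
    (hBrefl : ∀ x, B x x) (hBtrans : ∀ {x y z}, B x y → B y z → B x z)
    (bar : S → S → S → S)
    -- (i) (y,z,t) ∈ T and (x,y,|yzt|) ∈ T imply |xy|yzt|| = |xzt|
    (h1 : ∀ x y z t, (B y z ∧ A z t) → (B x y ∧ A y (bar y z t)) →
      bar x y (bar y z t) = bar x z t)
    -- (ii) (x,y,z) ∈ T and (|xyz|,z,t) ∈ T imply ||xyz|zt| = |xyt|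
    (h2 : ∀ x y z t, (B x y ∧ A y z) → (B (bar x y z) z ∧ A z t) →
      bar (bar x y z) z t = bar x y t)
    -- (iii) (x,x,y) ∈ T implies |xxy| = y
    (h3 : ∀ x y, (B x x ∧ A x y) → bar x x y = y)
    -- (iv) (x,y,y) ∈ T implies |xyy| = x
    (h4 : ∀ x y, (B x y ∧ A y y) → bar x y y = x)
    -- (v) (x,y,z) ∈ T implies Hom_A(|xyz|,x) ≠ ∅ and Hom_B(z,|xyz|) ≠ ∅
    (h5 : ∀ x y z, (B x y ∧ A y z) → A x (bar x y z) ∧ B (bar x y z) z) :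
    -- the composite of u ∈ Hom(y,x) and v ∈ Hom(z,y) lies in Hom(z,x)
    (∀ x y z u v, (A x u ∧ B u y) → (A y v ∧ B v z) →
      A x (bar u y v) ∧ B (bar u y v) z) ∧
    -- identities: x ∈ Hom(x,x), and unit laws
    (∀ x, A x x ∧ B x x) ∧
    (∀ x y u, (A x u ∧ B u y) → bar x x u = u ∧ bar u y y = u) ∧
    -- associativity
    (∀ x y z t u v w, (A x u ∧ B u y) → (A y v ∧ B v z) → (A z w ∧ B w t) →
      bar (bar u y v) z w = bar u y (bar v z w)) := by
  refine ⟨?_, fun x => ⟨hArefl x, hBrefl x⟩, ?_, ?_⟩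
  · rintro x y z u v ⟨hxu, huy⟩ ⟨hyv, hvz⟩
    obtain ⟨ha, hb⟩ := h5 u y v ⟨huy, hyv⟩
    exact ⟨hAtrans hxu ha, hBtrans hb hvz⟩
  · rintro x y u ⟨hxu, huy⟩
    exact ⟨h3 x u ⟨hBrefl x, hxu⟩, h4 u y ⟨huy, hArefl y⟩⟩
  · rintro x y z t u v w ⟨hxu, huy⟩ ⟨hyv, hvz⟩ ⟨hzw, hwt⟩
    obtain ⟨ha1, hb1⟩ := h5 u y v ⟨huy, hyv⟩
    obtain ⟨ha2, hb2⟩ := h5 v z w ⟨hvz, hzw⟩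
    have e1 : bar (bar u y v) v (bar v z w) = bar (bar u y v) z w :=
      h1 (bar u y v) v z w ⟨hvz, hzw⟩ ⟨hb1, ha2⟩
    have e2 : bar (bar u y v) v (bar v z w) = bar u y (bar v z w) :=
      h2 u y v (bar v z w) ⟨huy, hyv⟩ ⟨hb1, ha2⟩
    rw [← e1, e2]
end

section
/- Let (A, B, ▷, ◁, |···|) be a matched pair of groupoids (a matched pair of Set-categories in which A and B are groupoids). Then every morphism of the bicrossed product category A ⋈ B is invertible; explicitly, for g ∈ Hom_A(u, x) and f ∈ Hom_B(y, u), the morphism (g, f) has inverse (f⁻¹▷g⁻¹, (f◁(f⁻¹▷g⁻¹))⁻¹). -/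
/-- A matched pair of groupoids `𝐀`, `𝐁` with common object set `S`.  `Ahom x y` denotes
the set of morphisms `y → x` in `𝐀` (the paper's `ₓA_y`), similarly for `𝐁`;
`act f g = f▷g : |x y z| → x` in `𝐀` and `coact f g = f◁g : z → |x y z|` in `𝐁`,
for `f : y → x` in `𝐁` and `g : z → y` in `𝐀`. -/
structure MatchedPairGroupoids where
  S : Type
  Ahom : S → S → Type
  Bhom : S → S → Type
  idA : ∀ x, Ahom x x
  compA : ∀ {x y z}, Ahom x y → Ahom y z → Ahom x z
  idB : ∀ x, Bhom x x
  compB : ∀ {x y z}, Bhom x y → Bhom y z → Bhom x z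
  -- 𝐀 is a category
  assocA : ∀ {x y z t} (g : Ahom x y) (h : Ahom y z) (k : Ahom z t),
    compA (compA g h) k = compA g (compA h k)
  idA_comp : ∀ {x y} (g : Ahom x y), compA (idA x) g = g
  comp_idA : ∀ {x y} (g : Ahom x y), compA g (idA y) = g
  -- 𝐁 is a category
  assocB : ∀ {x y z t} (f : Bhom x y) (h : Bhom y z) (k : Bhom z t),
    compB (compB f h) k = compB f (compB h k)
  idB_comp : ∀ {x y} (f : Bhom x y), compB (idB x) f = f
  comp_idB : ∀ {x y} (f : Bhom x y), compB f (idB y) = f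
  -- 𝐀 and 𝐁 are groupoids
  invA : ∀ {x y}, Ahom x y → Ahom y x
  compA_invA : ∀ {x y} (g : Ahom x y), compA g (invA g) = idA x
  invA_compA : ∀ {x y} (g : Ahom x y), compA (invA g) g = idA y
  invB : ∀ {x y}, Bhom x y → Bhom y x
  compB_invB : ∀ {x y} (f : Bhom x y), compB f (invB f) = idB x
  invB_compB : ∀ {x y} (f : Bhom x y), compB (invB f) f = idB y
  -- the function |···| : S³ → S and the actions ▷, ◁
  bar : S → S → S → S
  act : ∀ {x y z}, Bhom x y → Ahom y z → Ahom x (bar x y z)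
  coact : ∀ {x y z}, Bhom x y → Ahom y z → Bhom (bar x y z) z
  -- conditions on |···|
  bar1 : ∀ {x y z t}, Bhom x y → Bhom y z → Ahom z t → bar x y (bar y z t) = bar x z t
  bar2 : ∀ {x y z t}, Bhom x y → Ahom y z → Ahom z t → bar (bar x y z) z t = bar x y t
  bar3 : ∀ {x y}, Ahom x y → bar x x y = y
  bar4 : ∀ {x y}, Bhom x y → bar x y y = x
  -- (f∘f')▷g = f▷(f'▷g)
  ax1 : ∀ {x y z t} (f : Bhom x y) (f' : Bhom y z) (g : Ahom z t),
    HEq (act (compB f f') g) (act f (act f' g))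
  -- (f∘f')◁g = (f◁(f'▷g)) ∘ (f'◁g)
  ax2 : ∀ {x y z t} (f : Bhom x y) (f' : Bhom y z) (g : Ahom z t),
    HEq (coact (compB f f') g) (compB (coact f (act f' g)) (coact f' g))
  -- f▷(g∘g') = (f▷g) ∘ ((f◁g)▷g')
  ax3 : ∀ {x y z t} (f : Bhom x y) (g : Ahom y z) (g' : Ahom z t),
    HEq (act f (compA g g')) (compA (act f g) (act (coact f g) g'))
  -- f◁(g∘g') = (f◁g)◁g'
  ax4 : ∀ {x y z t} (f : Bhom x y) (g : Ahom y z) (g' : Ahom z t),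
    HEq (coact f (compA g g')) (coact (coact f g) g')
  -- 1▷g = g and 1◁g = 1
  ax5 : ∀ {x y} (g : Ahom x y), HEq (act (idB x) g) g
  ax6 : ∀ {x y} (g : Ahom x y), HEq (coact (idB x) g) (idB y)
  -- f▷1 = 1 and f◁1 = f
  ax7 : ∀ {x y} (f : Bhom x y), HEq (act f (idA y)) (idA x)
  ax8 : ∀ {x y} (f : Bhom x y), HEq (coact f (idA y)) f

namespace MatchedPairGroupoids

variable (M : MatchedPairGroupoids)

/-- Hom-sets of the bicrossed product `A ⋈ B`:
`Hom(y, x) = ⨿_{u ∈ S} Hom_A(u, x) × Hom_B(y, u)`. -/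
def Hom (x y : M.S) : Type := Σ u : M.S, M.Ahom x u × M.Bhom u y

/-- Composition in `A ⋈ B`: `(g, f) ∘ (g', f') = (g ∘ (f▷g'), (f◁g') ∘ f')`. -/
def comp {x y z : M.S} : M.Hom x y → M.Hom y z → M.Hom x z
  | ⟨u, g, f⟩, ⟨v, g', f'⟩ =>
      ⟨M.bar u y v, M.compA g (M.act f g'), M.compB (M.coact f g') f'⟩

/-- Identities of `A ⋈ B`. -/
def ident (x : M.S) : M.Hom x x := ⟨x, M.idA x, M.idB x⟩

end MatchedPairGroupoids


namespace MatchedPairGroupoids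

variable (M : MatchedPairGroupoids)

theorem heq_compA' {x x' y y' z z' : M.S} (hx : x = x') (hy : y = y') (hz : z = z')
    {g : M.Ahom x y} {g' : M.Ahom x' y'} {h : M.Ahom y z} {h' : M.Ahom y' z'}
    (hg : HEq g g') (hh : HEq h h') : HEq (M.compA g h) (M.compA g' h') := by
  subst hx; subst hy; subst hz; rw [eq_of_heq hg, eq_of_heq hh]

theorem heq_compB' {x x' y y' z z' : M.S} (hx : x = x') (hy : y = y') (hz : z = z')
    {g : M.Bhom x y} {g' : M.Bhom x' y'} {h : M.Bhom y z} {h' : M.Bhom y' z'}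
    (hg : HEq g g') (hh : HEq h h') : HEq (M.compB g h) (M.compB g' h') := by
  subst hx; subst hy; subst hz; rw [eq_of_heq hg, eq_of_heq hh]

theorem heq_act' {x x' y y' z z' : M.S} (hx : x = x') (hy : y = y') (hz : z = z')
    {f : M.Bhom x y} {f' : M.Bhom x' y'} {g : M.Ahom y z} {g' : M.Ahom y' z'}
    (hf : HEq f f') (hg : HEq g g') : HEq (M.act f g) (M.act f' g') := by
  subst hx; subst hy; subst hz; rw [eq_of_heq hf, eq_of_heq hg]

theorem heq_coact' {x x' y y' z z' : M.S} (hx : x = x') (hy : y = y') (hz : z = z')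
    {f : M.Bhom x y} {f' : M.Bhom x' y'} {g : M.Ahom y z} {g' : M.Ahom y' z'}
    (hf : HEq f f') (hg : HEq g g') : HEq (M.coact f g) (M.coact f' g') := by
  subst hx; subst hy; subst hz; rw [eq_of_heq hf, eq_of_heq hg]

theorem heq_invB' {x x' y y' : M.S} (hx : x = x') (hy : y = y')
    {f : M.Bhom x y} {f' : M.Bhom x' y'} (hf : HEq f f') : HEq (M.invB f) (M.invB f') := by
  subst hx; subst hy; rw [eq_of_heq hf]

theorem heq_idA' {x x' : M.S} (hx : x = x') : HEq (M.idA x) (M.idA x') := by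
  subst hx; rfl

end MatchedPairGroupoids

theorem heq_prod_mk {α α' β β' : Type} (hα : α = α') (hβ : β = β')
    {a : α} {a' : α'} {b : β} {b' : β'} (ha : HEq a a') (hb : HEq b b') :
    HEq ((a, b) : α × β) ((a', b') : α' × β') := by
  subst hα; subst hβ; rw [eq_of_heq ha, eq_of_heq hb]

/-- The bicrossed product of a matched pair of groupoids is a groupoid: every morphism
`(g, f)` is invertible, with inverse `(f⁻¹▷g⁻¹, (f◁(f⁻¹▷g⁻¹))⁻¹)`. -/
theorem stmt19 (M : MatchedPairGroupoids) :
    ∀ {x y : M.S} (u : M.S) (g : M.Ahom x u) (f : M.Bhom u y),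
      ∃ (v : M.S) (g' : M.Ahom y v) (f' : M.Bhom v x),
        M.comp ⟨u, g, f⟩ ⟨v, g', f'⟩ = M.ident x ∧
        M.comp ⟨v, g', f'⟩ ⟨u, g, f⟩ = M.ident y ∧
        v = M.bar y u x ∧
        HEq g' (M.act (M.invB f) (M.invA g)) ∧
        HEq f' (M.invB (M.coact f (M.act (M.invB f) (M.invA g)))) := by
  intro x y u g f
  have e1 : M.bar u y (M.bar y u x) = x :=
    (M.bar1 f (M.invB f) (M.invA g)).trans (M.bar3 (M.invA g))
  have e2 : M.bar (M.bar y u x) x u = y :=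
    (M.bar2 (M.invB f) (M.invA g) g).trans (M.bar4 (M.invB f))
  set v := M.bar y u x with hv
  set g' : M.Ahom y v := M.act (M.invB f) (M.invA g) with hg'
  have e3 : M.bar (M.bar u y v) v y = u :=
    (M.bar2 f g' (M.invA g')).trans (M.bar4 f)
  set h : M.Bhom (M.bar u y v) v := M.coact f g' with hh
  set h2 : M.Bhom x v := cast (congrArg (fun w => M.Bhom w v) e1) h with hh2def
  have hh2 : HEq h2 h := cast_heq _ _
  set f' : M.Bhom v x := M.invB h2 with hf'def
  have hf' : HEq f' (M.invB h) := by
    rw [hf'def]; exact M.heq_invB' e1.symm rfl hh2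
  -- F1 : f ▷ g' ≃ g⁻¹
  have s1 : HEq (M.act (M.compB f (M.invB f)) (M.invA g)) (M.act f g') :=
    M.ax1 f (M.invB f) (M.invA g)
  have s2 : HEq (M.act (M.compB f (M.invB f)) (M.invA g)) (M.act (M.idB u) (M.invA g)) := by
    rw [M.compB_invB]
  have F1 : HEq (M.act f g') (M.invA g) :=
    (s1.symm.trans s2).trans (M.ax5 (M.invA g))
  -- F2 : h ▷ g'⁻¹ ≃ g
  have t1 : HEq (M.act f (M.compA g' (M.invA g'))) (M.compA (M.act f g') (M.act h (M.invA g'))) :=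
    M.ax3 f g' (M.invA g')
  have t2 : HEq (M.act f (M.compA g' (M.invA g'))) (M.act f (M.idA y)) := by
    rw [M.compA_invA]
  have P0 : HEq (M.compA (M.act f g') (M.act h (M.invA g'))) (M.idA u) :=
    (t1.symm.trans t2).trans (M.ax7 f)
  have c1 : g = M.compA g (M.idA u) := (M.comp_idA g).symm
  have c2 : HEq (M.compA g (M.idA u))
      (M.compA g (M.compA (M.act f g') (M.act h (M.invA g')))) :=
    M.heq_compA' rfl rfl e3.symm HEq.rfl P0.symm
  have c3 : M.compA g (M.compA (M.act f g') (M.act h (M.invA g')))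
      = M.compA (M.compA g (M.act f g')) (M.act h (M.invA g')) :=
    (M.assocA g (M.act f g') (M.act h (M.invA g'))).symm
  have q1 : HEq (M.compA g (M.act f g')) (M.idA (M.bar u y v)) :=
    ((M.heq_compA' rfl rfl e1 HEq.rfl F1).trans
      (heq_of_eq (M.compA_invA g))).trans (M.heq_idA' e1.symm)
  have c4 : HEq (M.compA (M.compA g (M.act f g')) (M.act h (M.invA g')))
      (M.compA (M.idA (M.bar u y v)) (M.act h (M.invA g'))) :=
    M.heq_compA' e1.symm rfl rfl q1 HEq.rfl
  have c5 : M.compA (M.idA (M.bar u y v)) (M.act h (M.invA g')) = M.act h (M.invA g') :=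
    M.idA_comp _
  have F2 : HEq (M.act h (M.invA g')) g :=
    (((((heq_of_eq c1).trans c2).trans (heq_of_eq c3)).trans c4).trans (heq_of_eq c5)).symm
  -- F3 : h ◁ g'⁻¹ ≃ f
  have u1 : HEq (M.coact f (M.compA g' (M.invA g'))) (M.coact h (M.invA g')) :=
    M.ax4 f g' (M.invA g')
  have u2 : HEq (M.coact f (M.compA g' (M.invA g'))) (M.coact f (M.idA y)) := by
    rw [M.compA_invA]
  have F3 : HEq (M.coact h (M.invA g')) f :=
    (u1.symm.trans u2).trans (M.ax8 f)
  -- F4 : f' ▷ g ≃ g'⁻¹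
  have v1 : HEq (M.act (M.compB (M.invB h) h) (M.invA g'))
      (M.act (M.invB h) (M.act h (M.invA g'))) :=
    M.ax1 (M.invB h) h (M.invA g')
  have v2 : HEq (M.act (M.compB (M.invB h) h) (M.invA g'))
      (M.act (M.idB v) (M.invA g')) := by rw [M.invB_compB]
  have v4 : HEq (M.act (M.invB h) (M.act h (M.invA g'))) (M.act f' g) :=
    M.heq_act' rfl e1 e3 hf'.symm F2
  have F4 : HEq (M.act f' g) (M.invA g') :=
    ((v4.symm.trans v1.symm).trans v2).trans (M.ax5 (M.invA g'))
  -- B-component of second composition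
  have w1 : HEq (M.coact (M.compB (M.invB h) h) (M.invA g'))
      (M.compB (M.coact (M.invB h) (M.act h (M.invA g'))) (M.coact h (M.invA g'))) :=
    M.ax2 (M.invB h) h (M.invA g')
  have w2 : HEq (M.coact (M.compB (M.invB h) h) (M.invA g'))
      (M.coact (M.idB v) (M.invA g')) := by rw [M.invB_compB]
  have ebar : M.bar v (M.bar u y v) (M.bar (M.bar u y v) v y) = M.bar v x u := by
    rw [e3, e1]
  have w4 : HEq (M.compB (M.coact (M.invB h) (M.act h (M.invA g'))) (M.coact h (M.invA g')))
      (M.compB (M.coact f' g) f) :=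
    M.heq_compB' ebar e3 rfl (M.heq_coact' rfl e1 e3 hf'.symm F2) F3
  have G2B : HEq (M.compB (M.coact f' g) f) (M.idB y) :=
    ((w4.symm.trans w1.symm).trans w2).trans (M.ax6 (M.invA g'))
  -- A-component of second composition
  have G2A : HEq (M.compA g' (M.act f' g)) (M.idA y) :=
    (M.heq_compA' rfl rfl e2 HEq.rfl F4).trans (heq_of_eq (M.compA_invA g'))
  -- components of first composition
  have G1A : HEq (M.compA g (M.act f g')) (M.idA x) :=
    (M.heq_compA' rfl rfl e1 HEq.rfl F1).trans (heq_of_eq (M.compA_invA g))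
  have G1B : HEq (M.compB h f') (M.idB x) :=
    (M.heq_compB' e1 rfl rfl hh2.symm HEq.rfl).trans (heq_of_eq (M.compB_invB h2))
  refine ⟨v, g', f', ?_, ?_, rfl, HEq.rfl, hf'⟩
  · show (⟨M.bar u y v, M.compA g (M.act f g'), M.compB (M.coact f g') f'⟩ : M.Hom x x)
      = M.ident x
    exact Sigma.ext e1 (heq_prod_mk (by rw [e1]) (by rw [e1]) G1A G1B)
  · show (⟨M.bar v x u, M.compA g' (M.act f' g), M.compB (M.coact f' g) f⟩ : M.Hom y y)
      = M.ident y
    exact Sigma.ext e2 (heq_prod_mk (by rw [e2]) (by rw [e2]) G2A G2B)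
end
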